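/- arXiv:math/0207148 — 2 statements merged into one kernel-verified Lean document; each statement's English description precedes it below -/
import Mathlib

section
/- For functions l, r : ℝ → ℝ with (1+x²)²l and (1+x²)²r bounded in appropriate norms, the integral υ(X,T) = ε⁻² ∫₀^T l(X) r(X − 2sε⁻²) ds satisfies the pointwise bound (1+X²)|υ(X,T)| ≤ C ‖(1+·²)² l‖_∞ ‖(1+·²)² r‖_∞ · arctan(2Tε⁻²), uniformly in ε > 0. -/
open MeasureTheory Real Set

/-- For `l, r : ℝ → ℝ` with `(1+x²)²l`, `(1+x²)²r` bounded (by `Ml`, `Mr`),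
the integral `υ(X,T) = ε⁻² ∫₀^T l(X) r(X − 2sε⁻²) ds` satisfies the pointwise bound
`(1+X²)|υ(X,T)| ≤ C Ml Mr arctan(2Tε⁻²)`, uniformly in `ε > 0`. -/
theorem interaction_integral_pointwise_bound :
    ∃ C : ℝ, 0 < C ∧ ∀ (l r : ℝ → ℝ) (Ml Mr : ℝ),
      Continuous l → Continuous r →
      (∀ x : ℝ, (1 + x^2)^2 * |l x| ≤ Ml) →
      (∀ x : ℝ, (1 + x^2)^2 * |r x| ≤ Mr) →
      ∀ ε > (0:ℝ), ∀ T ≥ (0:ℝ), ∀ X : ℝ,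
        (1 + X^2) * |(ε^2)⁻¹ * ∫ s in (0:ℝ)..T, l X * r (X - 2*s/ε^2)|
          ≤ C * Ml * Mr * Real.arctan (2*T/ε^2) := by
  refine ⟨2, two_pos, ?_⟩
  intro l r Ml Mr hlc hrc hMl hMr ε hε T hT X
  have hε2 : (0:ℝ) < ε^2 := by positivity
  have hMl0 : 0 ≤ Ml := le_trans (by positivity) (hMl 0)
  have hMr0 : 0 ≤ Mr := le_trans (by positivity) (hMr 0)
  have hX0 : (0:ℝ) < 1 + X^2 := by positivity
  set c : ℝ := 2/ε^2 with hc
  have hc0 : (0:ℝ) < c := by positivity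
  -- pointwise bound
  have key : ∀ s : ℝ, |l X * r (X - c*s)| ≤ (2*Ml*Mr/(1+X^2)) * (1/(1+(c*s)^2)) := by
    intro s
    set b : ℝ := X - c*s with hb
    have hy : c*s = X - b := by rw [hb]; ring
    rw [abs_mul, hy]
    rw [div_mul_div_comm, le_div_iff₀ (by positivity)]
    have hY2AB : 1 + (X-b)^2 ≤ 2*((1+X^2)*(1+b^2)) := by
      nlinarith [sq_nonneg (X+b), sq_nonneg (X*b)]
    have h12 : (1+X^2)^2*|l X| * ((1+b^2)^2*|r b|) ≤ Ml * Mr :=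
      mul_le_mul (hMl X) (hMr b) (by positivity) hMl0
    have hB : (1+b^2) ≤ (1+b^2)^2 := by nlinarith [sq_nonneg b, sq_nonneg (b^2)]
    calc |l X| * |r b| * ((1+X^2)*(1+(X-b)^2))
        ≤ |l X| * |r b| * ((1+X^2)*(2*((1+X^2)*(1+b^2)))) := by
          have := mul_le_mul_of_nonneg_left hY2AB (le_of_lt hX0)
          exact mul_le_mul_of_nonneg_left this (by positivity)
      _ = 2 * (((1+X^2)^2*|l X|) * ((1+b^2)*|r b|)) := by ring
      _ ≤ 2 * (((1+X^2)^2*|l X|) * ((1+b^2)^2*|r b|)) := by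
          have := mul_le_mul_of_nonneg_right hB (abs_nonneg (r b))
          have := mul_le_mul_of_nonneg_left this (by positivity : (0:ℝ) ≤ (1+X^2)^2*|l X|)
          linarith
      _ ≤ 2 * (Ml*Mr) := by linarith
      _ = 2*Ml*Mr := by ring
      _ = 2*Ml*Mr*1 := by ring
  -- rewrite integrand
  have harg : ∀ s : ℝ, X - 2*s/ε^2 = X - c*s := by intro s; rw [hc]; ring
  -- integrability
  have hF : IntervalIntegrable (fun s => l X * r (X - c*s)) volume 0 T := by
    apply Continuous.intervalIntegrable
    exact continuous_const.mul (hrc.comp (continuous_const.sub (continuous_const.mul continuous_id)))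
  have hG : IntervalIntegrable (fun s => (2*Ml*Mr/(1+X^2)) * (1/(1+(c*s)^2))) volume 0 T := by
    apply Continuous.intervalIntegrable
    apply continuous_const.mul
    apply Continuous.div continuous_const
    · continuity
    · intro s; positivity
  -- compute ∫ G
  have hGval : (∫ s in (0:ℝ)..T, (2*Ml*Mr/(1+X^2)) * (1/(1+(c*s)^2)))
      = (2*Ml*Mr/(1+X^2)) * (c⁻¹ * Real.arctan (c*T)) := by
    rw [intervalIntegral.integral_const_mul]
    congr 1
    have := intervalIntegral.integral_comp_mul_left (fun x => 1/(1+x^2)) (ne_of_gt hc0) (a := 0) (b := T)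
    rw [this]
    rw [mul_zero, integral_one_div_one_add_sq]
    simp [Real.arctan_zero]
  -- bound the integral
  have hbound : |∫ s in (0:ℝ)..T, l X * r (X - c*s)|
      ≤ (2*Ml*Mr/(1+X^2)) * (c⁻¹ * Real.arctan (c*T)) := by
    rw [← hGval]
    calc |∫ s in (0:ℝ)..T, l X * r (X - c*s)|
        ≤ ∫ s in (0:ℝ)..T, |l X * r (X - c*s)| := by
          have h := intervalIntegral.norm_integral_le_integral_norm (f := fun s => l X * r (X - c*s)) (μ := volume) hT
          simpa only [Real.norm_eq_abs] using h
      _ ≤ ∫ s in (0:ℝ)..T, (2*Ml*Mr/(1+X^2)) * (1/(1+(c*s)^2)) := by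
          apply intervalIntegral.integral_mono_on hT (hF.abs) hG
          intro s _
          exact key s
  -- finish
  have heq : (∫ s in (0:ℝ)..T, l X * r (X - 2*s/ε^2)) = ∫ s in (0:ℝ)..T, l X * r (X - c*s) := by
    apply intervalIntegral.integral_congr
    intro s _
    show l X * r (X - 2*s/ε^2) = l X * r (X - c*s)
    rw [harg s]
  rw [heq, abs_mul, abs_of_nonneg (le_of_lt (inv_pos.mpr hε2))]
  have hcT : c*T = 2*T/ε^2 := by rw [hc]; ring
  have h2 : (1 + X^2) * ((ε^2)⁻¹ * ((2*Ml*Mr/(1+X^2)) * (c⁻¹ * Real.arctan (c*T))))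
      = Ml * Mr * Real.arctan (2*T/ε^2) := by
    rw [hcT, hc]
    field_simp
  have harctan : 0 ≤ Real.arctan (2*T/ε^2) := by
    have := Real.arctan_strictMono.monotone (by positivity : (0:ℝ) ≤ 2*T/ε^2)
    simpa [Real.arctan_zero] using this
  calc (1 + X^2) * ((ε^2)⁻¹ * |∫ s in (0:ℝ)..T, l X * r (X - c*s)|)
      ≤ (1 + X^2) * ((ε^2)⁻¹ * ((2*Ml*Mr/(1+X^2)) * (c⁻¹ * Real.arctan (c*T)))) := by
        apply mul_le_mul_of_nonneg_left _ (le_of_lt hX0)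
        exact mul_le_mul_of_nonneg_left hbound (le_of_lt (inv_pos.mpr hε2))
    _ = Ml * Mr * Real.arctan (2*T/ε^2) := h2
    _ ≤ 2 * Ml * Mr * Real.arctan (2*T/ε^2) := by
        nlinarith [mul_nonneg (mul_nonneg hMl0 hMr0) harctan]
end

section
/- Given C > 0 and T₀ > 0, there exists ε₀ > 0 such that for every ε ∈ (0, ε₀), any C¹ function η : [0,T₀] → [0,∞) with η(0) = 0 satisfying η'(T) ≤ C(1 + η(T) + ε^{5/2} η(T)^{3/2}) for all T ∈ [0,T₀] obeys η(T) ≤ 2CT₀ e^{2CT₀} for all T ∈ [0,T₀]. -/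
open Set Real Filter Topology

lemma gronwall_aux (C : ℝ) (hC : 0 < C) {c T₀ : ℝ} (hc0 : 0 ≤ c) (hcT : c ≤ T₀)
    {η η' : ℝ → ℝ} (h0 : η 0 = 0)
    (hd : ∀ T ∈ Icc (0:ℝ) T₀, HasDerivAt η (η' T) T)
    (hb : ∀ T ∈ Ico (0:ℝ) c, η' T ≤ 2*C*η T + 2*C) :
    ∀ t ∈ Icc (0:ℝ) c, η t ≤ Real.exp (2*C*t) - 1 := by
  have hsub : Icc (0:ℝ) c ⊆ Icc 0 T₀ := Icc_subset_Icc le_rfl hcT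
  have hcont : ContinuousOn η (Icc (0:ℝ) c) := fun t ht =>
    (hd t (hsub ht)).continuousAt.continuousWithinAt
  have key := le_gronwallBound_of_liminf_deriv_right_le (f := η) (f' := η')
    (δ := 0) (K := 2*C) (ε := 2*C) (a := 0) (b := c) hcont
    (fun x hx r hr => by
      have hder : HasDerivWithinAt η (η' x) (Ioi x) x :=
        (hd x (hsub (Ico_subset_Icc_self hx))).hasDerivWithinAt
      rw [hasDerivWithinAt_iff_tendsto_slope] at hder
      have hne : Ioi x \ {x} = Ioi x := by
        simp [Set.diff_singleton_eq_self, Set.mem_Ioi]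
      rw [hne] at hder
      have hev : ∀ᶠ z in 𝓝[>] x, slope η x z < r := hder.eventually_lt_const hr
      exact (hev.mono fun z hz => by
        rwa [slope_def_field, div_eq_inv_mul] at hz).frequently)
    (by simp [h0]) hb
  intro t ht
  have := key t ht
  have h2C : (2*C : ℝ) ≠ 0 := by positivity
  rw [gronwallBound_of_K_ne_0 h2C] at this
  rw [div_self h2C] at this
  simpa using this

/-- Nonlinear Gronwall lemma.  Given `C, T₀ > 0` there is `ε₀ > 0` such that
for all `ε ∈ (0, ε₀)`, any `C¹` function `η : [0,T₀] → [0,∞)` with `η(0) = 0` and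
`η' ≤ C(1 + η + ε^{5/2} η^{3/2})` on `[0,T₀]` satisfies `η ≤ 2CT₀ e^{2CT₀}` on `[0,T₀]`. -/
theorem nonlinear_gronwall (C T₀ : ℝ) (hC : 0 < C) (hT₀ : 0 < T₀) :
    ∃ ε₀ : ℝ, 0 < ε₀ ∧ ∀ ε ∈ Set.Ioo (0:ℝ) ε₀, ∀ η η' : ℝ → ℝ,
      η 0 = 0 →
      (∀ T ∈ Set.Icc (0:ℝ) T₀, 0 ≤ η T) →
      (∀ T ∈ Set.Icc (0:ℝ) T₀, HasDerivAt η (η' T) T) →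
      ContinuousOn η' (Set.Icc (0:ℝ) T₀) →
      (∀ T ∈ Set.Icc (0:ℝ) T₀,
        η' T ≤ C * (1 + η T + ε ^ ((5:ℝ)/2) * (η T) ^ ((3:ℝ)/2))) →
      ∀ T ∈ Set.Icc (0:ℝ) T₀, η T ≤ 2 * C * T₀ * Real.exp (2 * C * T₀) := by
  set B : ℝ := 2 * C * T₀ * Real.exp (2 * C * T₀) with hBdef
  have hB0 : 0 < B := by positivity
  set M : ℝ := B + 1 with hMdef
  have hM0 : 0 < M := by positivity
  refine ⟨M ^ (-(3:ℝ)/5), Real.rpow_pos_of_pos hM0 _, ?_⟩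
  rintro ε ⟨hε0, hεε₀⟩ η η' h0 hpos hd hcont hineq
  -- key smallness: ε^{5/2} * M^{3/2} ≤ 1
  have hsmall : ε ^ ((5:ℝ)/2) * M ^ ((3:ℝ)/2) ≤ 1 := by
    have h1 : ε ^ ((5:ℝ)/2) ≤ (M ^ (-(3:ℝ)/5)) ^ ((5:ℝ)/2) :=
      Real.rpow_le_rpow hε0.le hεε₀.le (by norm_num)
    have h2 : (M ^ (-(3:ℝ)/5)) ^ ((5:ℝ)/2) = M ^ (-(3:ℝ)/2) := by
      rw [← Real.rpow_mul hM0.le]; norm_num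
    have h3 : M ^ (-(3:ℝ)/2) * M ^ ((3:ℝ)/2) = 1 := by
      rw [← Real.rpow_add hM0]; norm_num
    calc ε ^ ((5:ℝ)/2) * M ^ ((3:ℝ)/2)
        ≤ M ^ (-(3:ℝ)/2) * M ^ ((3:ℝ)/2) := by
          apply mul_le_mul_of_nonneg_right _ (Real.rpow_nonneg hM0.le _)
          rw [← h2]; exact h1
      _ = 1 := h3
  -- conditional linear bound on the derivative
  have hbound : ∀ T ∈ Icc (0:ℝ) T₀, η T ≤ M → η' T ≤ 2*C*η T + 2*C := by
    intro T hT hTM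
    have h1 := hineq T hT
    have h2 : (η T) ^ ((3:ℝ)/2) ≤ M ^ ((3:ℝ)/2) :=
      Real.rpow_le_rpow (hpos T hT) hTM (by norm_num)
    have h3 : ε ^ ((5:ℝ)/2) * (η T) ^ ((3:ℝ)/2) ≤ 1 := by
      calc ε ^ ((5:ℝ)/2) * (η T) ^ ((3:ℝ)/2)
          ≤ ε ^ ((5:ℝ)/2) * M ^ ((3:ℝ)/2) :=
            mul_le_mul_of_nonneg_left h2 (Real.rpow_nonneg hε0.le _)
        _ ≤ 1 := hsmall
    nlinarith [hpos T hT]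
  -- the bound exp(2Ct)-1 ≤ B on [0,T₀]
  have hexpB : ∀ t ∈ Icc (0:ℝ) T₀, Real.exp (2*C*t) - 1 ≤ B := by
    intro t ht
    obtain ⟨ht0, htT⟩ := ht
    have h1 : Real.exp (2*C*t) - 1 ≤ 2*C*t * Real.exp (2*C*t) := by
      have h2 : (1 - 2*C*t) * Real.exp (2*C*t) ≤ Real.exp (-(2*C*t)) * Real.exp (2*C*t) :=
        mul_le_mul_of_nonneg_right (by linarith [Real.add_one_le_exp (-(2*C*t))])
          (Real.exp_pos _).le
      rw [← Real.exp_add] at h2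
      simp only [neg_add_cancel, Real.exp_zero] at h2
      nlinarith
    have h3 : 2*C*t * Real.exp (2*C*t) ≤ 2*C*T₀ * Real.exp (2*C*T₀) := by
      have he : Real.exp (2*C*t) ≤ Real.exp (2*C*T₀) := by
        apply Real.exp_le_exp.2; nlinarith
      exact mul_le_mul (by nlinarith) he (Real.exp_pos _).le (by positivity)
    calc Real.exp (2*C*t) - 1 ≤ 2*C*t * Real.exp (2*C*t) := h1
      _ ≤ 2*C*T₀ * Real.exp (2*C*T₀) := h3
      _ = B := rfl
  -- bootstrap set
  set A : Set ℝ := {T | T ∈ Icc (0:ℝ) T₀ ∧ ∀ s ∈ Icc (0:ℝ) T, η s ≤ M} with hAdef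
  have h0A : (0:ℝ) ∈ A := by
    refine ⟨⟨le_rfl, hT₀.le⟩, ?_⟩
    intro s hs
    have : s = 0 := le_antisymm hs.2 hs.1
    rw [this, h0]; positivity
  have hAbdd : BddAbove A := ⟨T₀, fun x hx => hx.1.2⟩
  set c : ℝ := sSup A with hcdef
  have hc0 : 0 ≤ c := le_csSup hAbdd h0A
  have hcT : c ≤ T₀ := csSup_le ⟨0, h0A⟩ fun x hx => hx.1.2
  -- η ≤ M on [0,c)
  have hMlt : ∀ s, 0 ≤ s → s < c → η s ≤ M := by
    intro s hs0 hsc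
    obtain ⟨T, hTA, hsT⟩ := exists_lt_of_lt_csSup ⟨0, h0A⟩ hsc
    exact hTA.2 s ⟨hs0, hsT.le⟩
  -- η ≤ M on [0,c]
  have hMc : ∀ s ∈ Icc (0:ℝ) c, η s ≤ M := by
    intro s ⟨hs0, hsc⟩
    rcases lt_or_eq_of_le hsc with h | h
    · exact hMlt s hs0 h
    · rw [h]
      rcases eq_or_lt_of_le hc0 with h' | h'
      · rw [← h', h0]; positivity
      · -- c > 0 : take limit from the left
        have hcIcc : c ∈ Icc (0:ℝ) T₀ := ⟨hc0, hcT⟩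
        have hct : ContinuousWithinAt η (Ico 0 c) c :=
          (hd c hcIcc).continuousAt.continuousWithinAt
        have hne : (𝓝[Ico (0:ℝ) c] c).NeBot := by
          rw [nhdsWithin_Ico_eq_nhdsLT h']
          infer_instance
        refine le_of_tendsto hct ?_
        filter_upwards [self_mem_nhdsWithin] with x hx
        exact hMlt x hx.1 hx.2
  -- Gronwall on [0,c]
  have hBc : ∀ t ∈ Icc (0:ℝ) c, η t ≤ B := by
    intro t ht
    have := gronwall_aux C hC hc0 hcT h0 hd
      (fun T hT => hbound T ⟨hT.1, hT.2.le.trans hcT⟩ (hMc T (Ico_subset_Icc_self hT))) t ht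
    exact this.trans (hexpB t ⟨ht.1, ht.2.trans hcT⟩)
  -- c = T₀
  have hcT₀ : c = T₀ := by
    by_contra hne
    have hclt : c < T₀ := lt_of_le_of_ne hcT hne
    have hcB : η c ≤ B := hBc c ⟨hc0, le_rfl⟩
    have hcM : η c < M := by rw [hMdef]; linarith
    have hev : ∀ᶠ x in 𝓝 c, η x < M :=
      (hd c ⟨hc0, hcT⟩).continuousAt.eventually_lt_const hcM
    obtain ⟨δ, hδ0, hδ⟩ := Metric.eventually_nhds_iff.1 hev
    set T := min (c + δ/2) T₀ with hTdef
    have hcltT : c < T := lt_min (by linarith) hclt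
    have hTA : T ∈ A := by
      refine ⟨⟨hc0.trans hcltT.le, min_le_right _ _⟩, ?_⟩
      intro s ⟨hs0, hsT⟩
      rcases le_or_gt s c with h | h
      · exact hMc s ⟨hs0, h⟩
      · apply le_of_lt
        apply hδ
        have hsd : s ≤ c + δ/2 := hsT.trans (min_le_left _ _)
        rw [Real.dist_eq, abs_lt]
        constructor <;> linarith
    exact absurd (le_csSup hAbdd hTA) (not_le.2 hcltT)
  intro T hT
  exact hBc T ⟨hT.1, by rw [hcT₀]; exact hT.2⟩
end
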